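/- (Model 2e3c4m) Define vector fields on ℝ⁴ (coordinates (x,y,u,v)) by e₁ = ∂x + y∂u + 2x∂v, e₂ = ∂y + x∂u, e₃ = x∂x + u∂u + 2v∂v, e₄ = x∂y + v∂u, e₅ = y∂y + u∂u, and let S = {(x, y, xy, x²) : (x,y) ∈ ℝ²}. Then: (i) each of e₁,…,e₅ is tangent to S; (ii) at every point of S the first two components of e₁ and e₂ are the linearly independent vectors (1,0) and (0,1) of ℝ², so S is affinely homogeneous; (iii) with bracket [X,Y](p) = (DY)(p)(X(p)) − (DX)(p)(Y(p)) one has [e₁,e₃] = e₁, [e₁,e₄] = e₂, [e₂,e₅] = e₂, [e₃,e₄] = e₄, [e₄,e₅] = e₄, and [e₁,e₂] = [e₁,e₅] = [e₂,e₃] = [e₂,e₄] = [e₃,e₅] = 0. -/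

import Mathlib

namespace Model2e3c4m

/-- Lie bracket of vector fields on `ℝ⁴`, `[X,Y](p) = DY(p)(X(p)) − DX(p)(Y(p))`. -/
noncomputable def lieBracket (X Y : (Fin 4 → ℝ) → Fin 4 → ℝ) :
    (Fin 4 → ℝ) → Fin 4 → ℝ :=
  fun p => fderiv ℝ Y p (X p) - fderiv ℝ X p (Y p)

/-- Tangency of a vector field `X` on `ℝ⁴ ∋ (x,y,u,v)` to the graph
`S = {(x, y, F(x,y), G(x,y))}`. -/
def TangentToGraph (F G : ℝ × ℝ → ℝ) (X : (Fin 4 → ℝ) → Fin 4 → ℝ) : Prop :=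
  ∀ p : ℝ × ℝ,
    X ![p.1, p.2, F p, G p] 2
        = fderiv ℝ F p (1, 0) * X ![p.1, p.2, F p, G p] 0
          + fderiv ℝ F p (0, 1) * X ![p.1, p.2, F p, G p] 1 ∧
    X ![p.1, p.2, F p, G p] 3
        = fderiv ℝ G p (1, 0) * X ![p.1, p.2, F p, G p] 0
          + fderiv ℝ G p (0, 1) * X ![p.1, p.2, F p, G p] 1

/-- `u = xy`. -/
noncomputable def F : ℝ × ℝ → ℝ := fun p => p.1 * p.2
/-- `v = x²`. -/
noncomputable def G : ℝ × ℝ → ℝ := fun p => p.1 ^ 2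

/-- `e₁ = ∂x + y∂u + 2x∂v`. -/
noncomputable def e₁ : (Fin 4 → ℝ) → Fin 4 → ℝ := fun p => ![1, 0, p 1, 2 * p 0]
/-- `e₂ = ∂y + x∂u`. -/
noncomputable def e₂ : (Fin 4 → ℝ) → Fin 4 → ℝ := fun p => ![0, 1, p 0, 0]
/-- `e₃ = x∂x + u∂u + 2v∂v`. -/
noncomputable def e₃ : (Fin 4 → ℝ) → Fin 4 → ℝ := fun p => ![p 0, 0, p 2, 2 * p 3]
/-- `e₄ = x∂y + v∂u`. -/
noncomputable def e₄ : (Fin 4 → ℝ) → Fin 4 → ℝ := fun p => ![0, p 0, p 3, 0]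
/-- `e₅ = y∂y + u∂u`. -/
noncomputable def e₅ : (Fin 4 → ℝ) → Fin 4 → ℝ := fun p => ![0, p 1, p 2, 0]

lemma fd_proj (p v : Fin 4 → ℝ) (j : Fin 4) :
    fderiv ℝ (fun q : Fin 4 → ℝ => q j) p v = v j := by
  rw [(hasFDerivAt_apply j p).fderiv]; rfl

lemma diff_proj (p : Fin 4 → ℝ) (j : Fin 4) :
    DifferentiableAt ℝ (fun q : Fin 4 → ℝ => q j) p :=
  (hasFDerivAt_apply j p).differentiableAt

lemma fd_cmul (p v : Fin 4 → ℝ) (j : Fin 4) (c : ℝ) :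
    fderiv ℝ (fun q : Fin 4 → ℝ => c * q j) p v = c * v j := by
  rw [fderiv_const_mul (diff_proj p j)]
  simp [fd_proj]

lemma comp_proj (f : (Fin 4 → ℝ) → Fin 4 → ℝ) (p : Fin 4 → ℝ)
    (hf : DifferentiableAt ℝ f p) (i : Fin 4) (v : Fin 4 → ℝ) :
    fderiv ℝ f p v i = fderiv ℝ (fun q => f q i) p v := by
  have h := fderiv_comp (𝕜 := ℝ) p (hasFDerivAt_apply i (f p)).differentiableAt hf
  have he : (fun q : Fin 4 → ℝ => f q i) = (fun w : Fin 4 → ℝ => w i) ∘ f := rfl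
  rw [he, h, (hasFDerivAt_apply i (f p)).fderiv]
  rfl

lemma diff_e₁ (p : Fin 4 → ℝ) : DifferentiableAt ℝ e₁ p := by
  apply differentiableAt_pi''; intro i; fin_cases i <;> simp [e₁] <;> fun_prop
lemma diff_e₂ (p : Fin 4 → ℝ) : DifferentiableAt ℝ e₂ p := by
  apply differentiableAt_pi''; intro i; fin_cases i <;> simp [e₂] <;> fun_prop
lemma diff_e₃ (p : Fin 4 → ℝ) : DifferentiableAt ℝ e₃ p := by
  apply differentiableAt_pi''; intro i; fin_cases i <;> simp [e₃] <;> fun_prop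
lemma diff_e₄ (p : Fin 4 → ℝ) : DifferentiableAt ℝ e₄ p := by
  apply differentiableAt_pi''; intro i; fin_cases i <;> simp [e₄] <;> fun_prop
lemma diff_e₅ (p : Fin 4 → ℝ) : DifferentiableAt ℝ e₅ p := by
  apply differentiableAt_pi''; intro i; fin_cases i <;> simp [e₅] <;> fun_prop

lemma fdF (p : ℝ × ℝ) : fderiv ℝ F p (1, 0) = p.2 ∧ fderiv ℝ F p (0, 1) = p.1 := by
  have h1 : HasFDerivAt (fun p : ℝ × ℝ => p.1) (ContinuousLinearMap.fst ℝ ℝ ℝ) p :=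
    hasFDerivAt_fst
  have h2 : HasFDerivAt (fun p : ℝ × ℝ => p.2) (ContinuousLinearMap.snd ℝ ℝ ℝ) p :=
    hasFDerivAt_snd
  have h : fderiv ℝ F p = _ := (h1.mul h2).fderiv
  rw [h]; constructor <;> simp

lemma fdG (p : ℝ × ℝ) : fderiv ℝ G p (1, 0) = 2 * p.1 ∧ fderiv ℝ G p (0, 1) = 0 := by
  have h1 : HasFDerivAt (fun p : ℝ × ℝ => p.1) (ContinuousLinearMap.fst ℝ ℝ ℝ) p :=
    hasFDerivAt_fst
  have hG : G = fun p : ℝ × ℝ => p.1 * p.1 := by funext q; simp [G, sq]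
  rw [hG, (show HasFDerivAt (fun p : ℝ × ℝ => p.1 * p.1) _ p from h1.mul h1).fderiv]; constructor <;> simp <;> ring

/-- **Model 2e3c4m:** the surface `{u = xy, v = x²}` is affinely homogeneous, with the
five tangent affine vector fields `e₁, …, e₅` satisfying the stated bracket relations. -/
theorem model_2e3c4m :
    (TangentToGraph F G e₁ ∧ TangentToGraph F G e₂ ∧ TangentToGraph F G e₃ ∧
      TangentToGraph F G e₄ ∧ TangentToGraph F G e₅) ∧
    (∀ p : ℝ × ℝ,
      e₁ ![p.1, p.2, F p, G p] 0 = 1 ∧ e₁ ![p.1, p.2, F p, G p] 1 = 0 ∧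
      e₂ ![p.1, p.2, F p, G p] 0 = 0 ∧ e₂ ![p.1, p.2, F p, G p] 1 = 1 ∧
      LinearIndependent ℝ
        ![((e₁ ![p.1, p.2, F p, G p] 0, e₁ ![p.1, p.2, F p, G p] 1) : ℝ × ℝ),
          ((e₂ ![p.1, p.2, F p, G p] 0, e₂ ![p.1, p.2, F p, G p] 1) : ℝ × ℝ)]) ∧
    (lieBracket e₁ e₃ = e₁ ∧ lieBracket e₁ e₄ = e₂ ∧ lieBracket e₂ e₅ = e₂ ∧
      lieBracket e₃ e₄ = e₄ ∧ lieBracket e₄ e₅ = e₄ ∧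
      lieBracket e₁ e₂ = 0 ∧ lieBracket e₁ e₅ = 0 ∧ lieBracket e₂ e₃ = 0 ∧
      lieBracket e₂ e₄ = 0 ∧ lieBracket e₃ e₅ = 0) := by
  have hd : ∀ (X : (Fin 4 → ℝ) → Fin 4 → ℝ),
      (X = e₁ ∨ X = e₂ ∨ X = e₃ ∨ X = e₄ ∨ X = e₅) →
      ∀ p, DifferentiableAt ℝ X p := by
    rintro X (rfl | rfl | rfl | rfl | rfl) p
    exacts [diff_e₁ p, diff_e₂ p, diff_e₃ p, diff_e₄ p, diff_e₅ p]
  refine ⟨⟨?_, ?_, ?_, ?_, ?_⟩, ?_, ?_, ?_, ?_, ?_, ?_, ?_, ?_, ?_, ?_, ?_⟩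
  · intro p
    rw [(fdF p).1, (fdF p).2, (fdG p).1, (fdG p).2]
    constructor <;> simp [e₁, F, G] <;> ring
  · intro p
    rw [(fdF p).1, (fdF p).2, (fdG p).1, (fdG p).2]
    constructor <;> simp [e₂, F, G] <;> ring
  · intro p
    rw [(fdF p).1, (fdF p).2, (fdG p).1, (fdG p).2]
    constructor <;> simp [e₃, F, G] <;> ring
  · intro p
    rw [(fdF p).1, (fdF p).2, (fdG p).1, (fdG p).2]
    constructor <;> simp [e₄, F, G] <;> ring
  · intro p
    rw [(fdF p).1, (fdF p).2, (fdG p).1, (fdG p).2]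
    constructor <;> simp [e₅, F, G] <;> ring
  · intro p
    refine ⟨rfl, rfl, rfl, rfl, ?_⟩
    simp only [e₁, e₂]
    have : (![((1:ℝ),(0:ℝ)), ((0:ℝ),(1:ℝ))] : Fin 2 → ℝ × ℝ) =
        fun i => ![(1,0), (0,1)] i := rfl
    apply LinearIndependent.pair_iff.mpr
    intro s t h
    simp only [Matrix.cons_val_zero, Matrix.cons_val_one, Matrix.head_cons] at h
    have h1 := congrArg Prod.fst h
    have h2 := congrArg Prod.snd h
    simp at h1 h2
    exact ⟨h1, h2⟩
  all_goals {
    funext p i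
    simp only [lieBracket, Pi.sub_apply]
    rw [comp_proj _ p (hd _ (by simp) p), comp_proj _ p (hd _ (by simp) p)]
    fin_cases i <;>
      simp [e₁, e₂, e₃, e₄, e₅, fd_proj, fd_cmul] <;> ring }

end Model2e3c4m
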